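/- On a sphere of radius ρ, consider a spherical triangle with vertices f, q_s, q with side lengths |f q_s| = 2αε, |q_s q| = ρφ, |f q| = 2α − ρφ, and interior angle π − ν at q_s. Then the spherical law of cosines implies ρ tan φ = p²/(1 + e cos ν), where p² = ρ(cos(2αε/ρ) − cos(2α/ρ))/sin(2α/ρ) and e = sin(2αε/ρ)/sin(2α/ρ). -/

import Mathlib

open Real

/-- Spherical focal equation: for a spherical triangle with vertices `f, q_s, q`, sides of
angular lengths `2αε/ρ` (from `f` to `q_s`), `φ` (from `q_s` to `q`), `2α/ρ − φ` (from `f`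
to `q`), and interior angle `π − ν` at `q_s`, the spherical law of cosines implies
`ρ tan φ = p²/(1 + e cos ν)` with `p² = ρ(cos(2αε/ρ) − cos(2α/ρ))/sin(2α/ρ)` and
`e = sin(2αε/ρ)/sin(2α/ρ)`. -/
theorem spherical_conic_focal_equation (ρ α ε φ ν : ℝ) (hρ : 0 < ρ)
    (hsin : Real.sin (2 * α / ρ) ≠ 0) (hcosφ : Real.cos φ ≠ 0)
    (hden : 1 + (Real.sin (2 * α * ε / ρ) / Real.sin (2 * α / ρ)) * Real.cos ν ≠ 0)
    (hlaw : Real.cos (2 * α / ρ - φ) =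
      Real.cos (2 * α * ε / ρ) * Real.cos φ +
        Real.sin (2 * α * ε / ρ) * Real.sin φ * Real.cos (π - ν)) :
    ρ * Real.tan φ =
      (ρ * ((Real.cos (2 * α * ε / ρ) - Real.cos (2 * α / ρ)) / Real.sin (2 * α / ρ))) /
        (1 + (Real.sin (2 * α * ε / ρ) / Real.sin (2 * α / ρ)) * Real.cos ν) := by
  rw [Real.cos_sub, Real.cos_pi_sub] at hlaw
  rw [Real.tan_eq_sin_div_cos]
  have hden' : Real.sin (2 * α / ρ) + Real.sin (2 * α * ε / ρ) * Real.cos ν ≠ 0 := by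
    intro h
    apply hden
    field_simp
    linarith [h]
  field_simp
  linear_combination hlaw
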